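/- Let A' be an irreducible deterministic complete finite automaton with a stable pair (s,t), and let B' be the quotient of A' by the congruence generated by (s,t). Then the period of B' (gcd of cycle lengths of its underlying graph) equals the period of A'. -/
import Mathlib


def dcaRun {Q A : Type*} (δ : Q → A → Q) (p : Q) (w : List A) : Q := w.foldl δ p

def Synchronizable {Q A : Type*} (δ : Q → A → Q) (p q : Q) : Prop :=
  ∃ w : List A, dcaRun δ p w = dcaRun δ q w

def StablePair {Q A : Type*} (δ : Q → A → Q) (p q : Q) : Prop :=
  ∀ u : List A, Synchronizable δ (dcaRun δ p u) (dcaRun δ q u)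

/-- The set of lengths of cycles of the underlying graph of the automaton. -/
def CycleLengths {Q A : Type*} (δ : Q → A → Q) : Set ℕ :=
  {n | 0 < n ∧ ∃ (p : Q) (w : List A), w.length = n ∧ dcaRun δ p w = p}

/-- The gcd of a set of natural numbers: the common divisor divisible by every
common divisor. -/
noncomputable def setGcd (S : Set ℕ) : ℕ :=
  sInf {d | (∀ n ∈ S, d ∣ n) ∧ ∀ e : ℕ, (∀ n ∈ S, e ∣ n) → e ∣ d}

/-- The period of an automaton: the gcd of the lengths of all its cycles. -/
noncomputable def dcaPeriod {Q A : Type*} (δ : Q → A → Q) : ℕ :=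
  setGcd (CycleLengths δ)

theorem dcaRun_append {Q A : Type*} (δ : Q → A → Q) (p : Q) (u v : List A) :
    dcaRun δ p (u ++ v) = dcaRun δ (dcaRun δ p u) v :=
  List.foldl_append ..

/-- Quotienting an irreducible automaton by the congruence generated by a
stable pair does not change the period. -/
theorem period_quotient_eq_period {Q A : Type*} [Fintype Q] (δ : Q → A → Q)
    (hirr : ∀ p q : Q, ∃ w : List A, dcaRun δ p w = q)
    (s t : Q) (hst : StablePair δ s t)
    (r : Setoid Q)
    (hcong : ∀ (a : A) (p q : Q), r.r p q → r.r (δ p a) (δ q a))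
    (hrst : r.r s t)
    (hleast : ∀ r' : Setoid Q,
      (∀ (a : A) (p q : Q), r'.r p q → r'.r (δ p a) (δ q a)) → r'.r s t →
      ∀ p q : Q, r.r p q → r'.r p q)
    (δq : Quotient r → A → Quotient r)
    (hδq : ∀ (p : Q) (a : A), δq ⟦p⟧ a = ⟦δ p a⟧) :
    dcaPeriod δq = dcaPeriod δ := by
  classical
  -- running the quotient automaton
  have runq : ∀ (w : List A) (p : Q), dcaRun δq ⟦p⟧ w = ⟦dcaRun δ p w⟧ := by
    intro w
    induction w with
    | nil => intro p; rfl
    | cons a w ih =>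
      intro p
      show dcaRun δq (δq ⟦p⟧ a) w = ⟦dcaRun δ (δ p a) w⟧
      rw [hδq, ih]
  -- a common divisor of the cycle lengths of δ divides all cycle lengths of δq
  have key : ∀ e : ℕ, (∀ n ∈ CycleLengths δ, e ∣ n) →
      ∀ n ∈ CycleLengths δq, e ∣ n := by
    intro e he
    -- e divides the length of any closed walk of δ
    have hcyc : ∀ (q : Q) (u : List A), dcaRun δ q u = q → e ∣ u.length := by
      intro q u hu
      rcases Nat.eq_zero_or_pos u.length with h0 | h0
      · simp [h0]
      · exact he u.length ⟨h0, q, u, rfl, hu⟩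
    -- the phase function
    set φ : Q → ZMod e := fun p => ((Classical.choose (hirr s p)).length : ZMod e) with hφ
    have hdvd_cast : ∀ n : ℕ, e ∣ n → (n : ZMod e) = 0 := by
      intro n hn
      exact (ZMod.natCast_eq_zero_iff n e).mpr hn
    -- φ is well defined: any word from s to p has length φ p mod e
    have hwd : ∀ (p : Q) (w : List A), dcaRun δ s w = p → (w.length : ZMod e) = φ p := by
      intro p w hw
      have hw' : dcaRun δ s (Classical.choose (hirr s p)) = p := Classical.choose_spec (hirr s p)
      obtain ⟨v, hv⟩ := hirr p s
      have c1 : dcaRun δ s (w ++ v) = s := by rw [dcaRun_append, hw, hv]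
      have c2 : dcaRun δ s (Classical.choose (hirr s p) ++ v) = s := by
        rw [dcaRun_append, hw', hv]
      have d1 := hdvd_cast _ (hcyc _ _ c1)
      have d2 := hdvd_cast _ (hcyc _ _ c2)
      simp only [List.length_append, Nat.cast_add] at d1 d2
      have : (w.length : ZMod e) = -(v.length : ZMod e) := by linear_combination d1
      rw [this, hφ]
      linear_combination -d2
    -- the phase increases by the length of the word read
    have hstep : ∀ (p : Q) (u : List A),
        φ (dcaRun δ p u) = φ p + (u.length : ZMod e) := by
      intro p u
      have hw : dcaRun δ s (Classical.choose (hirr s p)) = p := Classical.choose_spec (hirr s p)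
      have h1 : dcaRun δ s (Classical.choose (hirr s p) ++ u) = dcaRun δ p u := by
        rw [dcaRun_append, hw]
      have h2 := hwd _ _ h1
      have h3 : (((Classical.choose (hirr s p)).length : ZMod e)) = φ p := hwd _ _ hw
      simp only [List.length_append, Nat.cast_add] at h2
      rw [← h2, h3]
    -- φ s = φ t, by stability
    have hφst : φ s = φ t := by
      obtain ⟨w, hw⟩ := hst []
      have hw' : dcaRun δ s w = dcaRun δ t w := hw
      have := hstep s w
      rw [hw', hstep t w] at this
      exact (add_right_cancel this).symm
    -- φ induces a congruence, so it is constant on r-classes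
    have hφr : ∀ p q : Q, r.r p q → φ p = φ q := by
      refine hleast ⟨fun p q => φ p = φ q, ⟨fun _ => rfl, fun h => h.symm, fun h h' => h.trans h'⟩⟩
        ?_ hφst
      intro a p q hpq
      show φ (δ p a) = φ (δ q a)
      have e1 : δ p a = dcaRun δ p [a] := rfl
      have e2 : δ q a = dcaRun δ q [a] := rfl
      rw [e1, e2, hstep, hstep, hpq]
    -- now divide every cycle length of the quotient
    rintro n ⟨hn, x, w, hlen, hx⟩
    obtain ⟨p, rfl⟩ := Quotient.exists_rep x
    rw [runq] at hx
    have hr : r.r (dcaRun δ p w) p := Quotient.exact hx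
    have : φ p + (w.length : ZMod e) = φ p := by
      rw [← hstep]; exact hφr _ _ hr
    have hcast : ((n : ℕ) : ZMod e) = 0 := by
      rw [← hlen]
      linear_combination this
    exact (ZMod.natCast_eq_zero_iff n e).mp hcast
  -- conversely, every cycle of δ projects to a cycle of δq
  have hsub : CycleLengths δ ⊆ CycleLengths δq := by
    rintro n ⟨hn, p, w, hlen, hp⟩
    refine ⟨hn, ⟦p⟧, w, hlen, ?_⟩
    rw [runq, hp]
  -- the two sets have the same common divisors, hence the same gcd
  have hCD : ∀ e : ℕ, (∀ n ∈ CycleLengths δq, e ∣ n) ↔ (∀ n ∈ CycleLengths δ, e ∣ n) := by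
    intro e
    constructor
    · intro h n hn; exact h n (hsub hn)
    · intro h; exact key e h
  unfold dcaPeriod setGcd
  congr 1
  ext d
  simp only [Set.mem_setOf_eq]
  constructor
  · rintro ⟨h1, h2⟩
    exact ⟨(hCD d).mp h1, fun e he => h2 e ((hCD e).mpr he)⟩
  · rintro ⟨h1, h2⟩
    exact ⟨(hCD d).mpr h1, fun e he => h2 e ((hCD e).mp he)⟩
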